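/- Let n ≥ 3 be an integer and m ∈ ℝ with m ≠ 0, set f(r) := r² − 2m r^{2−n}, and let I ⊆ (0,∞) be a nonempty open interval on which f > 0. Suppose β : I → ℝ and γ : ℝ → ℝ are twice continuously differentiable and satisfy, for all r ∈ I and all ψ ∈ ℝ, γ(ψ) · ( (f'(r))² − 2 f(r) f''(r) ) + 4 γ''(ψ) = 4 f(r)^{3/2} β''(r). Then γ is constant. (The point is that (f')² − 2 f f'' = 4 n m r^{2−2n}( (n−1) r^{n} − (n−2) m ) is a non-constant function of r on I when m ≠ 0.) -/

import Mathlib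

open Real Filter

/-- The radial function `f(r) = r² − 2m r^{2−n}` of the Horowitz–Myers metric. -/
noncomputable def fHM (n : ℕ) (m : ℝ) (r : ℝ) : ℝ :=
  r ^ 2 - 2 * m * r ^ ((2 : ℝ) - n)

private lemma hd_fHM (n : ℕ) (m r : ℝ) (hr : 0 < r) :
    HasDerivAt (fHM n m) (2 * r - 2 * m * (((2:ℝ) - n) * r ^ ((1:ℝ) - n))) r := by
  have h1 : HasDerivAt (fun x : ℝ => x ^ 2) (2 * r) r := by
    simpa using hasDerivAt_pow 2 r
  have h2 : HasDerivAt (fun x : ℝ => x ^ ((2:ℝ) - n)) (((2:ℝ) - n) * r ^ ((2:ℝ) - n - 1)) r :=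
    Real.hasDerivAt_rpow_const (Or.inl hr.ne')
  have h3 := h1.sub (h2.const_mul (2 * m))
  have he : (2:ℝ) - n - 1 = (1:ℝ) - n := by ring
  rw [he] at h3
  exact h3

private lemma deriv_fHM (n : ℕ) (m r : ℝ) (hr : 0 < r) :
    deriv (fHM n m) r = 2 * r - 2 * m * (((2:ℝ) - n) * r ^ ((1:ℝ) - n)) :=
  (hd_fHM n m r hr).deriv

private lemma hd2_fHM (n : ℕ) (m r : ℝ) (hr : 0 < r) :
    deriv (deriv (fHM n m)) r
      = 2 - 2 * m * (((2:ℝ) - n) * (((1:ℝ) - n) * r ^ (-(n:ℝ)))) := by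
  have hev : deriv (fHM n m) =ᶠ[nhds r]
      (fun x => 2 * x - 2 * m * (((2:ℝ) - n) * x ^ ((1:ℝ) - n))) := by
    filter_upwards [isOpen_Ioi.mem_nhds hr] with x hx
    exact deriv_fHM n m x hx
  rw [hev.deriv_eq]
  have h1 : HasDerivAt (fun x : ℝ => x ^ ((1:ℝ) - n)) (((1:ℝ) - n) * r ^ ((1:ℝ) - n - 1)) r :=
    Real.hasDerivAt_rpow_const (Or.inl hr.ne')
  have h2 : HasDerivAt (fun x : ℝ => 2 * x - 2 * m * (((2:ℝ) - n) * x ^ ((1:ℝ) - n)))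
      (2 - 2 * m * (((2:ℝ) - n) * (((1:ℝ) - n) * r ^ ((1:ℝ) - n - 1)))) r := by
    have := ((hasDerivAt_id r).const_mul 2).sub (((h1.const_mul ((2:ℝ) - n)).const_mul (2*m)))
    exact this.congr_deriv (by ring)
  have he : (1:ℝ) - n - 1 = -(n:ℝ) := by ring
  rw [he] at h2
  exact h2.deriv

/-- The quantity `(f')² − 2 f f''` simplifies to `4nm(n−1) r^{2−n} − 4nm²(n−2) r^{2−2n}`. -/
private lemma A_formula (n : ℕ) (m r : ℝ) (hr : 0 < r) :
    (deriv (fHM n m) r) ^ 2 - 2 * fHM n m r * deriv (deriv (fHM n m)) r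
      = 4 * n * m * ((n:ℝ) - 1) * r ^ ((2:ℝ) - n)
        - 4 * n * m ^ 2 * ((n:ℝ) - 2) * r ^ ((2:ℝ) - 2 * n) := by
  rw [deriv_fHM n m r hr, hd2_fHM n m r hr]
  have h1 : r ^ ((1:ℝ) - n) * r ^ ((1:ℝ) - n) = r ^ ((2:ℝ) - 2 * n) := by
    rw [← Real.rpow_add hr]; norm_num; ring_nf
  have h2 : r * r ^ ((1:ℝ) - n) = r ^ ((2:ℝ) - n) := by
    nth_rewrite 1 [← Real.rpow_one r]
    rw [← Real.rpow_add hr]; congr 1; ring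
  have h3 : r ^ 2 * r ^ (-(n:ℝ)) = r ^ ((2:ℝ) - n) := by
    rw [show r ^ 2 = r ^ ((2:ℝ)) by rw [← Real.rpow_natCast r 2]; norm_num,
      ← Real.rpow_add hr]
    ring_nf
  have h4 : r ^ ((2:ℝ) - n) * r ^ (-(n:ℝ)) = r ^ ((2:ℝ) - 2 * n) := by
    rw [← Real.rpow_add hr]; ring_nf
  simp only [fHM]
  linear_combination (4*m^2*((2:ℝ)-n)^2) * h1 + (-8*m*((2:ℝ)-n)) * h2
    + (4*m*((2:ℝ)-n)*((1:ℝ)-n)) * h3 + (-8*m^2*((2:ℝ)-n)*((1:ℝ)-n)) * h4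

private lemma A_nonconst (n : ℕ) (hn : 3 ≤ n) (m : ℝ) (hm : m ≠ 0)
    (I : Set ℝ) (hIopen : IsOpen I) (hIne : I.Nonempty)
    (hIpos : I ⊆ Set.Ioi (0 : ℝ)) (hfpos : ∀ r ∈ I, 0 < fHM n m r) :
    ∃ r₁ ∈ I, ∃ r₂ ∈ I,
      (deriv (fHM n m) r₁) ^ 2 - 2 * fHM n m r₁ * deriv (deriv (fHM n m)) r₁
      ≠ (deriv (fHM n m) r₂) ^ 2 - 2 * fHM n m r₂ * deriv (deriv (fHM n m)) r₂ := by
  by_contra hcon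
  push_neg at hcon
  obtain ⟨r₀, hr₀⟩ := hIne
  have hr₀pos : (0:ℝ) < r₀ := hIpos hr₀
  -- the explicit version of A
  set Ae : ℝ → ℝ := fun r => 4 * n * m * ((n:ℝ) - 1) * r ^ ((2:ℝ) - n)
        - 4 * n * m ^ 2 * ((n:ℝ) - 2) * r ^ ((2:ℝ) - 2 * n) with hAe
  -- Ae is locally constant at r₀
  have hevc : Ae =ᶠ[nhds r₀] (fun _ => Ae r₀) := by
    filter_upwards [hIopen.mem_nhds hr₀] with x hx
    have hxpos : (0:ℝ) < x := hIpos hx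
    rw [hAe]
    simp only
    rw [← A_formula n m x hxpos, ← A_formula n m r₀ hr₀pos, hcon x hx r₀ hr₀]
  have hderiv0 : deriv Ae r₀ = 0 := by
    rw [hevc.deriv_eq, deriv_const]
  -- but Ae has nonzero derivative at r₀
  have h1 : HasDerivAt (fun x : ℝ => x ^ ((2:ℝ) - n)) (((2:ℝ) - n) * r₀ ^ ((2:ℝ) - n - 1)) r₀ :=
    Real.hasDerivAt_rpow_const (Or.inl hr₀pos.ne')
  have h2 : HasDerivAt (fun x : ℝ => x ^ ((2:ℝ) - 2 * n))
      (((2:ℝ) - 2 * n) * r₀ ^ ((2:ℝ) - 2 * n - 1)) r₀ :=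
    Real.hasDerivAt_rpow_const (Or.inl hr₀pos.ne')
  have hD : HasDerivAt Ae
      (4 * n * m * ((n:ℝ) - 1) * (((2:ℝ) - n) * r₀ ^ ((2:ℝ) - n - 1))
        - 4 * n * m ^ 2 * ((n:ℝ) - 2) * (((2:ℝ) - 2 * n) * r₀ ^ ((2:ℝ) - 2 * n - 1))) r₀ := by
    have := (h1.const_mul (4 * n * m * ((n:ℝ) - 1))).sub
      (h2.const_mul (4 * n * m ^ 2 * ((n:ℝ) - 2)))
    exact this
  have hDval : deriv Ae r₀
      = 4 * n * m * ((n:ℝ) - 1) * (((2:ℝ) - n) * r₀ ^ ((2:ℝ) - n - 1))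
        - 4 * n * m ^ 2 * ((n:ℝ) - 2) * (((2:ℝ) - 2 * n) * r₀ ^ ((2:ℝ) - 2 * n - 1)) := hD.deriv
  -- show the derivative is nonzero
  have hfr : 0 < fHM n m r₀ := hfpos r₀ hr₀
  have hrn : 2 * m < r₀ ^ ((n:ℝ)) := by
    have hsplit : r₀ ^ 2 = r₀ ^ ((2:ℝ) - n) * r₀ ^ ((n:ℝ)) := by
      rw [← Real.rpow_add hr₀pos, show (2:ℝ) - n + n = 2 by ring,
        ← Real.rpow_natCast r₀ 2]; norm_num
    have hpow : (0:ℝ) < r₀ ^ ((2:ℝ) - n) := Real.rpow_pos_of_pos hr₀pos _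
    have : r₀ ^ ((2:ℝ) - n) * (r₀ ^ ((n:ℝ)) - 2 * m) > 0 := by
      have := hfr
      simp only [fHM] at this
      nlinarith [this, hsplit]
    nlinarith [this, hpow]
  have hsplit2 : r₀ ^ ((2:ℝ) - n - 1) = r₀ ^ ((2:ℝ) - 2 * n - 1) * r₀ ^ ((n:ℝ)) := by
    rw [← Real.rpow_add hr₀pos]; ring_nf
  have hpow2 : (0:ℝ) < r₀ ^ ((2:ℝ) - 2 * n - 1) := Real.rpow_pos_of_pos hr₀pos _
  have hn3 : (3:ℝ) ≤ (n:ℝ) := by exact_mod_cast hn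
  have hfac : r₀ ^ ((n:ℝ)) - 2 * m > 0 := by linarith
  have hne : deriv Ae r₀ ≠ 0 := by
    rw [hDval, hsplit2]
    have key : 4 * (n:ℝ) * m * ((n:ℝ) - 1) * (((2:ℝ) - n) * (r₀ ^ ((2:ℝ) - 2 * n - 1) * r₀ ^ ((n:ℝ))))
        - 4 * n * m ^ 2 * ((n:ℝ) - 2) * (((2:ℝ) - 2 * n) * r₀ ^ ((2:ℝ) - 2 * n - 1))
        = (4 * (n:ℝ) * ((n:ℝ) - 1) * ((n:ℝ) - 2) * m) *
          (r₀ ^ ((2:ℝ) - 2 * n - 1) * (2 * m - r₀ ^ ((n:ℝ)))) := by ring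
    rw [key]
    apply mul_ne_zero
    · exact mul_ne_zero (ne_of_gt (by nlinarith [hn3, mul_pos (by linarith : (0:ℝ) < (n:ℝ)-1) (by linarith : (0:ℝ) < (n:ℝ)-2)])) hm
    · apply mul_ne_zero hpow2.ne'
      linarith
  exact hne hderiv0

/-- Rigidity step in the classification of static potentials of the Horowitz–Myers metric with
coordinate mass `m ≠ 0`: if `γ(ψ)((f')² − 2ff'') + 4γ'' = 4 f^{3/2} β''` holds on `I × ℝ`,
then `γ` is constant (since `(f')² − 2ff'' = 4nm r^{2−2n}((n−1)rⁿ − (n−2)m)` is a non-constant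
function of `r` when `m ≠ 0`). -/
theorem HM_gamma_constant (n : ℕ) (hn : 3 ≤ n) (m : ℝ) (hm : m ≠ 0)
    (I : Set ℝ) (hIopen : IsOpen I) (hIconn : IsPreconnected I) (hIne : I.Nonempty)
    (hIpos : I ⊆ Set.Ioi (0 : ℝ)) (hfpos : ∀ r ∈ I, 0 < fHM n m r)
    (β γ : ℝ → ℝ) (hβ : ContDiffOn ℝ 2 β I) (hγ : ContDiff ℝ 2 γ)
    (heq : ∀ r ∈ I, ∀ ψ : ℝ,
      γ ψ * ((deriv (fHM n m) r) ^ 2 - 2 * fHM n m r * deriv (deriv (fHM n m)) r)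
          + 4 * deriv (deriv γ) ψ
        = 4 * fHM n m r ^ ((3 : ℝ) / 2) * deriv (deriv β) r) :
    ∃ c : ℝ, ∀ ψ : ℝ, γ ψ = c := by
  obtain ⟨r₁, hr₁, r₂, hr₂, hAne⟩ := A_nonconst n hn m hm I hIopen hIne hIpos hfpos
  refine ⟨γ 0, fun ψ => ?_⟩
  have e1 := heq r₁ hr₁ ψ
  have e2 := heq r₂ hr₂ ψ
  have e3 := heq r₁ hr₁ 0
  have e4 := heq r₂ hr₂ 0
  have key : (γ ψ - γ 0) *
      (((deriv (fHM n m) r₁) ^ 2 - 2 * fHM n m r₁ * deriv (deriv (fHM n m)) r₁)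
      - ((deriv (fHM n m) r₂) ^ 2 - 2 * fHM n m r₂ * deriv (deriv (fHM n m)) r₂)) = 0 := by
    linear_combination e1 - e2 - e3 + e4
  rcases mul_eq_zero.mp key with h | h
  · linarith
  · exact absurd (by linarith : _) hAne
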